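/- Let A : X → X be a (possibly unbounded, densely defined) linear operator on a Hilbert space X, C : X → ℝ^q a bounded finite-rank linear operator, and W a closed subspace such that W ∩ D(A) is dense in W and A(W ∩ ker C ∩ D(A)) ⊆ W. Then there exists a bounded linear operator D : ℝ^q → X such that (A + DC)(W ∩ D(A)) ⊆ W. -/

import Mathlib

set_option synthInstance.maxHeartbeats 800000


/-- For a densely defined operator `A` on a separable Hilbert space and a finite-rank
bounded output operator `C : X → ℝ^q`, every closed `(C,A)`-invariant subspace `W` with
`W ∩ D(A)` dense in `W` is feedback `(C,A)`-invariant: there is a bounded output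
injection `D` with `(A + DC)(W ∩ D(A)) ⊆ W`. -/
theorem CA_invariant_iff_feedback_CA_invariant
    {X : Type*} [NormedAddCommGroup X] [InnerProductSpace ℝ X] [CompleteSpace X]
    [TopologicalSpace.SeparableSpace X] {q : ℕ}
    (A : X →ₗ.[ℝ] X) (hdense : Dense (A.domain : Set X))
    (C : X →L[ℝ] EuclideanSpace ℝ (Fin q))
    (W : Submodule ℝ X) (hWclosed : IsClosed (W : Set X))
    (hWdense : closure ((W ⊓ A.domain : Submodule ℝ X) : Set X) = (W : Set X))
    (hinv : ∀ x (hx : x ∈ A.domain), x ∈ W → C x = 0 → A ⟨x, hx⟩ ∈ W) :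
    ∃ D : EuclideanSpace ℝ (Fin q) →L[ℝ] X,
      ∀ x (hx : x ∈ A.domain), x ∈ W → A ⟨x, hx⟩ + D (C x) ∈ W := by
  classical
  -- φ : (W ⊓ D(A)) →ₗ ℝ^q, restriction of C
  set M : Submodule ℝ X := W ⊓ A.domain with hM
  set φ : M →ₗ[ℝ] EuclideanSpace ℝ (Fin q) :=
    (C : X →ₗ[ℝ] EuclideanSpace ℝ (Fin q)).comp M.subtype with hφ
  set U : Submodule ℝ (EuclideanSpace ℝ (Fin q)) := LinearMap.range φ with hU
  -- right inverse g of the range restriction of φ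
  obtain ⟨g, hg⟩ := φ.rangeRestrict.exists_rightInverse_of_surjective
    (LinearMap.range_rangeRestrict φ)
  -- linear map U → X, u ↦ A (g u)
  set h : U →ₗ[ℝ] X :=
    A.toFun.comp ((Submodule.inclusion (inf_le_right : W ⊓ A.domain ≤ A.domain)).comp g)
    with hh
  set Dlin : EuclideanSpace ℝ (Fin q) →ₗ[ℝ] X :=
    (-h).comp (U.orthogonalProjectionOnto).toLinearMap with hD
  refine ⟨Dlin.toContinuousLinearMap, ?_⟩
  intro x hx hxW
  have hCx : C x ∈ U := ⟨⟨x, hxW, hx⟩, rfl⟩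
  set u : U := ⟨C x, hCx⟩ with hu
  set y : M := g u with hy
  have hCy : C (y : X) = C x := by
    have := LinearMap.congr_fun hg u
    exact congrArg Subtype.val this
  have hyW : (y : X) ∈ W := y.2.1
  have hyA : (y : X) ∈ A.domain := y.2.2
  have hsub : x - (y : X) ∈ A.domain := sub_mem hx hyA
  have hAW : A ⟨x - (y : X), hsub⟩ ∈ W := by
    refine hinv _ hsub (sub_mem hxW hyW) ?_
    simp [map_sub, hCy]
  have hproj : (U.orthogonalProjectionOnto) (C x) = u := by
    exact Submodule.orthogonalProjectionOnto_mem_subspace_eq_self u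
  have hDval : Dlin.toContinuousLinearMap (C x) = -A ⟨(y : X), hyA⟩ := by
    show Dlin (C x) = _
    simp only [hD, LinearMap.comp_apply, ContinuousLinearMap.coe_coe, hproj,
      LinearMap.neg_apply, hh]
    rfl
  rw [hDval]
  have : A ⟨x, hx⟩ + -A ⟨(y : X), hyA⟩ = A ⟨x - (y : X), hsub⟩ := by
    rw [← sub_eq_add_neg, ← A.map_sub]
    rfl
  rw [this]
  exact hAW
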